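/- If X = (x_{ij}) and Y = (y_{ij}) are N×N matrices with entries in a noncommutative algebra such that every 2×2 minor of X satisfies the GL_q(2) relations, every 2×2 minor of Y satisfies the GL_q(2) relations, and every entry of X commutes with every entry of Y, then every 2×2 minor of the matrix product G = XY also satisfies the GL_q(2) relations. -/
import Mathlib

section glq_aux
variable {K : Type*} {R : Type*} [CommRing K] [Ring R] [Algebra K R] (q : K)

private lemma glq_swap4 (a c b d : R) (h : c * b = b * c) : (a*c)*(b*d) = (a*b)*(c*d) := by
  rw [mul_assoc, ← mul_assoc c b, h, mul_assoc, ← mul_assoc]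

private lemma glq_pair_sum_zero {M : Type*} [AddCommGroup M] {n : ℕ} (h : Fin n → Fin n → M)
    (hd : ∀ k, h k k = 0) (ho : ∀ k l, k < l → h k l + h l k = 0) :
    (∑ k, ∑ l, h k l) = 0 := by
  rw [← Finset.sum_product']
  apply Finset.sum_ninvolution (fun p => (p.2, p.1))
  · intro p
    rcases lt_trichotomy p.1 p.2 with hlt | heq | hgt
    · exact ho _ _ hlt
    · simp [← heq, hd]
    · rw [add_comm]; exact ho _ _ hgt
  · intro p hp hne
    apply hp
    rw [← hne]
    have h2 : p.2 = p.1 := congrArg Prod.fst hne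
    rw [h2]
    exact hd _
  · simp
  · simp

private lemma glq_pair_eq {M : Type*} [AddCommGroup M] {n : ℕ} (f g : Fin n → Fin n → M)
    (hd : ∀ k, f k k = g k k)
    (ho : ∀ k l, k < l → f k l + f l k = g k l + g l k) :
    (∑ k, ∑ l, f k l) = (∑ k, ∑ l, g k l) := by
  have := glq_pair_sum_zero (fun k l => f k l - g k l) (fun k => by simp [hd k])
    (fun k l hkl => by have := ho k l hkl
                       rw [sub_add_sub_comm, this, sub_self])
  simpa [Finset.sum_sub_distrib, sub_eq_zero] using this

private lemma glq_offdiag1 (a₁ a₂ c₁ c₂ d₁ d₂ : R)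
    (hA : a₁ * a₂ = a₂ * a₁)
    (hY6 : c₁ * d₂ - d₁ * c₂ = d₂ * c₁ - c₂ * d₁)
    (h1 : c₁ * a₂ = a₂ * c₁) (h2 : d₁ * a₂ = a₂ * d₁)
    (h3 : c₂ * a₁ = a₁ * c₂) (h4 : d₂ * a₁ = a₁ * d₂) :
    (a₁*c₁)*(a₂*d₂) + (a₂*c₂)*(a₁*d₁) = (a₁*d₁)*(a₂*c₂) + (a₂*d₂)*(a₁*c₁) := by
  rw [glq_swap4 _ _ _ _ h1, glq_swap4 _ _ _ _ h3, glq_swap4 _ _ _ _ h2, glq_swap4 _ _ _ _ h4,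
    eq_add_of_sub_eq hY6, hA]
  noncomm_ring

private lemma glq_offdiag3 (a₁ a₂ b₁ b₂ c₁ c₂ : R)
    (hX5 : a₂ * b₁ = q ^ 2 • (b₁ * a₂))
    (hX6 : a₁ * b₂ - a₂ * b₁ = b₂ * a₁ - b₁ * a₂)
    (hC : c₁ * c₂ = q ^ 2 • (c₂ * c₁))
    (h1 : c₁ * b₂ = b₂ * c₁) (h2 : c₂ * b₁ = b₁ * c₂)
    (h3 : c₁ * a₂ = a₂ * c₁) (h4 : c₂ * a₁ = a₁ * c₂) :
    (a₁*c₁)*(b₂*c₂) + (a₂*c₂)*(b₁*c₁)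
      = q ^ 2 • ((b₁*c₁)*(a₂*c₂)) + q ^ 2 • ((b₂*c₂)*(a₁*c₁)) := by
  rw [glq_swap4 _ _ _ _ h1, glq_swap4 _ _ _ _ h2, glq_swap4 _ _ _ _ h3, glq_swap4 _ _ _ _ h4,
    eq_add_of_sub_eq hX6, hX5, hC]
  simp only [sub_mul, add_mul, smul_mul_assoc, mul_smul_comm, smul_sub, smul_add, smul_smul]
  module

private lemma glq_offdiag5 (a₁ a₂ b₁ b₂ c₁ c₂ d₁ d₂ : R)
    (hX5 : a₂ * b₁ = q ^ 2 • (b₁ * a₂))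
    (hX6 : a₁ * b₂ - a₂ * b₁ = b₂ * a₁ - b₁ * a₂)
    (hY5 : d₁ * c₂ = q ^ 2 • (c₂ * d₁))
    (hY6 : c₁ * d₂ - d₁ * c₂ = d₂ * c₁ - c₂ * d₁)
    (h1 : d₁ * b₂ = b₂ * d₁) (h2 : d₂ * b₁ = b₁ * d₂)
    (h3 : c₁ * a₂ = a₂ * c₁) (h4 : c₂ * a₁ = a₁ * c₂) :
    (a₁*d₁)*(b₂*c₂) + (a₂*d₂)*(b₁*c₁)
      = q ^ 2 • ((b₁*c₁)*(a₂*d₂)) + q ^ 2 • ((b₂*c₂)*(a₁*d₁)) := by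
  rw [glq_swap4 _ _ _ _ h1, glq_swap4 _ _ _ _ h2, glq_swap4 _ _ _ _ h3, glq_swap4 _ _ _ _ h4,
    eq_add_of_sub_eq hX6, eq_add_of_sub_eq hY6, hX5, hY5]
  simp only [sub_mul, add_mul, smul_mul_assoc, mul_smul_comm, smul_sub, smul_add, smul_smul,
    mul_sub, mul_add]
  module

private lemma glq_offdiag6 (a₁ a₂ b₁ b₂ c₁ c₂ d₁ d₂ : R)
    (hX5 : a₂ * b₁ = q ^ 2 • (b₁ * a₂))
    (hX6 : a₁ * b₂ - a₂ * b₁ = b₂ * a₁ - b₁ * a₂)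
    (hY5 : d₁ * c₂ = q ^ 2 • (c₂ * d₁))
    (hY6 : c₁ * d₂ - d₁ * c₂ = d₂ * c₁ - c₂ * d₁)
    (h1 : c₁ * b₂ = b₂ * c₁) (h2 : d₁ * b₂ = b₂ * d₁)
    (h3 : c₂ * b₁ = b₁ * c₂) (h4 : d₂ * b₁ = b₁ * d₂)
    (h5 : d₁ * a₂ = a₂ * d₁) (h6 : c₁ * a₂ = a₂ * c₁)
    (h7 : d₂ * a₁ = a₁ * d₂) (h8 : c₂ * a₁ = a₁ * c₂) :
    ((a₁*c₁)*(b₂*d₂) - (a₁*d₁)*(b₂*c₂)) + ((a₂*c₂)*(b₁*d₁) - (a₂*d₂)*(b₁*c₁))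
      = ((b₁*d₁)*(a₂*c₂) - (b₁*c₁)*(a₂*d₂)) + ((b₂*d₂)*(a₁*c₁) - (b₂*c₂)*(a₁*d₁)) := by
  rw [glq_swap4 _ _ _ _ h1, glq_swap4 _ _ _ _ h2, glq_swap4 _ _ _ _ h3, glq_swap4 _ _ _ _ h4,
    glq_swap4 _ _ _ _ h5, glq_swap4 _ _ _ _ h6, glq_swap4 _ _ _ _ h7, glq_swap4 _ _ _ _ h8,
    eq_add_of_sub_eq hX6, eq_add_of_sub_eq hY6, hX5, hY5]
  simp only [sub_mul, add_mul, smul_mul_assoc, mul_smul_comm, smul_sub, smul_add, smul_smul,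
    mul_sub, mul_add]
  module

private lemma glq_diag1 (a c d : R) (hcd : c * d = d * c)
    (h1 : c * a = a * c) (h2 : d * a = a * d) :
    (a*c)*(a*d) = (a*d)*(a*c) := by
  rw [glq_swap4 _ _ _ _ h1, glq_swap4 _ _ _ _ h2, hcd]

private lemma glq_diag3 (a b c : R) (hab : a * b = q ^ 2 • (b * a))
    (h1 : c * b = b * c) (h2 : c * a = a * c) :
    (a*c)*(b*c) = q ^ 2 • ((b*c)*(a*c)) := by
  rw [glq_swap4 _ _ _ _ h1, glq_swap4 _ _ _ _ h2, hab, smul_mul_assoc]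

private lemma glq_diag5 (a b c d : R) (hab : a * b = q ^ 2 • (b * a))
    (hdc : d * c = c * d) (h1 : d * b = b * d) (h2 : c * a = a * c) :
    (a*d)*(b*c) = q ^ 2 • ((b*c)*(a*d)) := by
  rw [glq_swap4 _ _ _ _ h1, glq_swap4 _ _ _ _ h2, hdc, hab, smul_mul_assoc]

private lemma glq_diag6 (a b c d : R) (hcd : c * d = d * c)
    (h1 : c * b = b * c) (h2 : d * b = b * d)
    (h3 : d * a = a * d) (h4 : c * a = a * c) :
    (a*c)*(b*d) - (a*d)*(b*c) = (b*d)*(a*c) - (b*c)*(a*d) := by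
  rw [glq_swap4 _ _ _ _ h1, glq_swap4 _ _ _ _ h2, glq_swap4 _ _ _ _ h3, glq_swap4 _ _ _ _ h4,
    hcd]
  noncomm_ring

end glq_aux

/-- The GL_q(2) relations for a quadruple `(a,b,c,d)` sitting in positions
`(1,1), (1,2), (2,1), (2,2)` of a 2×2 minor. -/
def GLq2Rel {K R : Type*} [CommSemiring K] [Ring R] [Algebra K R]
    (q : K) (a b c d : R) : Prop :=
  a * b = b * a ∧ c * d = d * c ∧ a * c = q ^ 2 • (c * a) ∧
  b * d = q ^ 2 • (d * b) ∧ b * c = q ^ 2 • (c * b) ∧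
  a * d - b * c = d * a - c * b

/-- An N×N matrix is a `GL_q(N)` matrix if all its 2×2 minors satisfy the
GL_q(2) relations. -/
def IsGLqMatrix {K R : Type*} [CommSemiring K] [Ring R] [Algebra K R]
    (q : K) {N : ℕ} (Z : Matrix (Fin N) (Fin N) R) : Prop :=
  ∀ i i' j j' : Fin N, i < i' → j < j' →
    GLq2Rel q (Z i j) (Z i j') (Z i' j) (Z i' j')

/-- If `X` and `Y` are `GL_q(N)` matrices whose entries mutually commute, then
`X * Y` is again a `GL_q(N)` matrix. -/
theorem stmt2 {K R : Type*} [Field K] [Ring R] [Algebra K R]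
    (q : K) (hq : q ≠ 0) (N : ℕ) (X Y : Matrix (Fin N) (Fin N) R)
    (hX : IsGLqMatrix q X) (hY : IsGLqMatrix q Y)
    (hcomm : ∀ i j k l : Fin N, Commute (X i j) (Y k l)) :
    IsGLqMatrix q (X * Y) := by
  intro i i' j j' hii' hjj'
  have hco : ∀ a b c d : Fin N, Y a b * X c d = X c d * Y a b :=
    fun a b c d => ((hcomm c d a b).symm).eq
  -- diagonal relations
  have hABdiag : ∀ k, X i k * X i' k = q ^ 2 • (X i' k * X i k) := by
    intro k
    rcases lt_or_ge k j' with h | h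
    · exact (hX i i' k j' hii' h).2.2.1
    · exact (hX i i' j k hii' (lt_of_lt_of_le hjj' h)).2.2.2.1
  have hCDdiag : ∀ k, Y k j * Y k j' = Y k j' * Y k j := by
    intro k
    rcases lt_or_ge k i' with h | h
    · exact (hY k i' j j' h hjj').1
    · exact (hY i k j j' (lt_of_lt_of_le hii' h) hjj').2.1
  simp only [Matrix.mul_apply]
  refine ⟨?_, ?_, ?_, ?_, ?_, ?_⟩
  · -- a*b = b*a
    rw [Finset.sum_mul_sum, Finset.sum_mul_sum]
    refine glq_pair_eq _ _ (fun k => ?_) (fun k l hkl => ?_)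
    · exact glq_diag1 _ _ _ (hCDdiag k) (hco _ _ _ _) (hco _ _ _ _)
    · have h6 := (hY k l j j' hkl hjj').2.2.2.2.2
      exact glq_offdiag1 _ _ _ _ _ _ (hX i i' k l hii' hkl).1 h6
        (hco _ _ _ _) (hco _ _ _ _) (hco _ _ _ _) (hco _ _ _ _)
  · -- c*d = d*c
    rw [Finset.sum_mul_sum, Finset.sum_mul_sum]
    refine glq_pair_eq _ _ (fun k => ?_) (fun k l hkl => ?_)
    · exact glq_diag1 _ _ _ (hCDdiag k) (hco _ _ _ _) (hco _ _ _ _)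
    · have h6 := (hY k l j j' hkl hjj').2.2.2.2.2
      exact glq_offdiag1 _ _ _ _ _ _ (hX i i' k l hii' hkl).2.1 h6
        (hco _ _ _ _) (hco _ _ _ _) (hco _ _ _ _) (hco _ _ _ _)
  · -- a*c = q² • (c*a)
    rw [Finset.sum_mul_sum, Finset.sum_mul_sum]
    simp only [Finset.smul_sum]
    refine glq_pair_eq _ _ (fun k => ?_) (fun k l hkl => ?_)
    · exact glq_diag3 q _ _ _ (hABdiag k) (hco _ _ _ _) (hco _ _ _ _)
    · have hx := hX i i' k l hii' hkl
      have hy := hY k l j j' hkl hjj'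
      exact glq_offdiag3 q _ _ _ _ _ _ hx.2.2.2.2.1 hx.2.2.2.2.2 hy.2.2.1
        (hco _ _ _ _) (hco _ _ _ _) (hco _ _ _ _) (hco _ _ _ _)
  · -- b*d = q² • (d*b)
    rw [Finset.sum_mul_sum, Finset.sum_mul_sum]
    simp only [Finset.smul_sum]
    refine glq_pair_eq _ _ (fun k => ?_) (fun k l hkl => ?_)
    · exact glq_diag3 q _ _ _ (hABdiag k) (hco _ _ _ _) (hco _ _ _ _)
    · have hx := hX i i' k l hii' hkl
      have hy := hY k l j j' hkl hjj'
      exact glq_offdiag3 q _ _ _ _ _ _ hx.2.2.2.2.1 hx.2.2.2.2.2 hy.2.2.2.1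
        (hco _ _ _ _) (hco _ _ _ _) (hco _ _ _ _) (hco _ _ _ _)
  · -- b*c = q² • (c*b)
    rw [Finset.sum_mul_sum, Finset.sum_mul_sum]
    simp only [Finset.smul_sum]
    refine glq_pair_eq _ _ (fun k => ?_) (fun k l hkl => ?_)
    · exact glq_diag5 q _ _ _ _ (hABdiag k) (hCDdiag k).symm (hco _ _ _ _) (hco _ _ _ _)
    · have hx := hX i i' k l hii' hkl
      have hy := hY k l j j' hkl hjj'
      exact glq_offdiag5 q _ _ _ _ _ _ _ _ hx.2.2.2.2.1 hx.2.2.2.2.2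
        hy.2.2.2.2.1 hy.2.2.2.2.2
        (hco _ _ _ _) (hco _ _ _ _) (hco _ _ _ _) (hco _ _ _ _)
  · -- a*d - b*c = d*a - c*b
    rw [Finset.sum_mul_sum, Finset.sum_mul_sum, Finset.sum_mul_sum, Finset.sum_mul_sum]
    simp only [← Finset.sum_sub_distrib]
    refine glq_pair_eq _ _ (fun k => ?_) (fun k l hkl => ?_)
    · exact glq_diag6 _ _ _ _ (hCDdiag k) (hco _ _ _ _) (hco _ _ _ _)
        (hco _ _ _ _) (hco _ _ _ _)
    · have hx := hX i i' k l hii' hkl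
      have hy := hY k l j j' hkl hjj'
      exact glq_offdiag6 q _ _ _ _ _ _ _ _ hx.2.2.2.2.1 hx.2.2.2.2.2
        hy.2.2.2.2.1 hy.2.2.2.2.2
        (hco _ _ _ _) (hco _ _ _ _) (hco _ _ _ _) (hco _ _ _ _)
        (hco _ _ _ _) (hco _ _ _ _) (hco _ _ _ _) (hco _ _ _ _)
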